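/- Let m ≥ 2 and let n_1, …, n_m be positive integers and τ_1, …, τ_m nonnegative integers with n_m + τ_m ≥ τ_{j+1} > n_j + τ_j for j = 1, …, m−1. Then Q_m(y) = ∏_{j=1}^{m−1} [ (n_m+τ_m−n_j−τ_j)! / ( (n_m+τ_m−τ_{j+1})! (τ_{j+1}−n_j−τ_j−1)! ) ] · ∫_0^1 ⋯ ∫_0^1 ∏_{j=1}^{m−1} (1 − y u_j u_{j+1} ⋯ u_{m−1})^{n_j} u_j^{n_m+τ_m−τ_{j+1}} (1−u_j)^{τ_{j+1}−n_j−τ_j−1} du_1 ⋯ du_{m−1}; consequently 0 ≤ Q_m(y) ≤ 1 for all y ∈ [0,1]. -/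

import Mathlib

open Finset MeasureTheory

lemma fact_prod_range (a b : ℕ) :
    a.factorial * ∏ j ∈ Finset.range (b + 1), (a + 1 + j) = (a + b + 1).factorial := by
  induction b with
  | zero => simp [Nat.factorial_succ, Nat.mul_comm]
  | succ b ih =>
      rw [Finset.prod_range_succ, ← Nat.mul_assoc, ih,
        show a + (b+1) + 1 = (a + b + 1) + 1 from by omega, Nat.factorial_succ (a+b+1),
        show a + 1 + (b+1) = a + b + 1 + 1 from by omega, Nat.mul_comm]

lemma beta_nat (a b : ℕ) :
    ∫ x in Set.Icc (0:ℝ) 1, x ^ a * (1 - x) ^ b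
      = (a.factorial * b.factorial : ℝ) / (a + b + 1).factorial := by
  have h := Complex.betaIntegral_eval_nat_add_one_right
    (u := (a : ℂ) + 1) (by simp; positivity) b
  have hβ : Complex.betaIntegral ((a:ℂ)+1) ((b:ℂ)+1)
      = ((∫ x in (0:ℝ)..1, x ^ a * (1 - x) ^ b : ℝ) : ℂ) := by
    rw [Complex.betaIntegral, ← intervalIntegral.integral_ofReal]
    refine intervalIntegral.integral_congr fun x _ => ?_
    rw [add_sub_cancel_right, add_sub_cancel_right,
      Complex.cpow_natCast, Complex.cpow_natCast]
    push_cast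
    ring
  have hprod : (∏ j ∈ Finset.range (b + 1), ((a:ℂ) + 1 + j))
      = ((a+b+1).factorial : ℂ) / (a.factorial : ℂ) := by
    rw [eq_div_iff (by exact_mod_cast (Nat.factorial_pos a).ne')]
    rw [← fact_prod_range a b]
    push_cast
    ring
  rw [hβ, hprod] at h
  have h2 : ((∫ x in (0:ℝ)..1, x ^ a * (1 - x) ^ b : ℝ) : ℂ)
      = (((a.factorial * b.factorial : ℝ) / (a + b + 1).factorial : ℝ) : ℂ) := by
    rw [h]
    push_cast
    rw [div_div_eq_mul_div]
    ring
  have h3 := Complex.ofReal_injective h2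
  rw [MeasureTheory.integral_Icc_eq_integral_Ioc,
    ← intervalIntegral.integral_of_le (by norm_num : (0:ℝ) ≤ 1), h3]

lemma poch_pos (c K : ℕ) :
    (ascPochhammer ℝ K).eval ((c:ℝ) + 1) = ((c + K).factorial : ℝ) / (c.factorial : ℝ) := by
  have h1 : (c.factorial : ℝ) ≠ 0 := by exact_mod_cast (Nat.factorial_pos c).ne'
  induction K with
  | zero => simp [div_self h1]
  | succ K ih =>
      rw [ascPochhammer_succ_right, Polynomial.eval_mul, ih]
      have h2 : ((c + (K+1)).factorial : ℝ) = ((c+K+1) : ℕ) * ((c+K).factorial : ℝ) := by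
        rw [show c + (K+1) = (c+K) + 1 from by omega, Nat.factorial_succ]; push_cast; ring
      rw [h2]
      simp only [Polynomial.eval_add, Polynomial.eval_X, Polynomial.eval_natCast]
      field_simp
      ring
      push_cast; ring

lemma poch_neg (n : ℕ) : ∀ k, k ≤ n →
    (ascPochhammer ℝ k).eval (-(n:ℝ)) = (-1)^k * (k.factorial : ℝ) * (n.choose k : ℝ) := by
  intro k
  induction k with
  | zero => simp
  | succ k ih =>
      intro hk
      have hk' : k ≤ n := by omega
      rw [ascPochhammer_succ_right, Polynomial.eval_mul, ih hk']
      simp only [Polynomial.eval_add, Polynomial.eval_X, Polynomial.eval_natCast]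
      have key : ((k+1).factorial : ℝ) * (n.choose (k+1) : ℝ)
          = (k.factorial : ℝ) * (n.choose k : ℝ) * ((n - k : ℕ) : ℝ) := by
        have h := Nat.choose_succ_right_eq n k
        have h2 : (k+1).factorial * n.choose (k+1) = k.factorial * (n.choose k * (n - k)) := by
          rw [Nat.factorial_succ, Nat.mul_assoc, ← h]; ring
        calc ((k+1).factorial : ℝ) * (n.choose (k+1) : ℝ)
            = (((k+1).factorial * n.choose (k+1) : ℕ) : ℝ) := by push_cast; ring
          _ = ((k.factorial * (n.choose k * (n - k)) : ℕ) : ℝ) := by rw [h2]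
          _ = (k.factorial : ℝ) * (n.choose k : ℝ) * ((n - k : ℕ) : ℝ) := by push_cast; ring
      have hcast : ((n - k : ℕ) : ℝ) = (n : ℝ) - (k : ℝ) := by
        rw [Nat.cast_sub hk']
      rw [pow_succ]
      linear_combination ((-1:ℝ)^k) * key + ((-1:ℝ)^k * (k.factorial:ℝ) * (n.choose k:ℝ)) * hcast

lemma pi_integral {d : ℕ} (g : Fin d → ℝ → ℝ) :
    ∫ u in Set.pi Set.univ (fun _ : Fin d => Set.Icc (0:ℝ) 1), ∏ j, g j (u j)
      = ∏ j, ∫ x in Set.Icc (0:ℝ) 1, g j x := by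
  rw [← MeasureTheory.integral_indicator (MeasurableSet.univ_pi (fun _ => measurableSet_Icc))]
  have hind : (Set.pi Set.univ fun _ : Fin d => Set.Icc (0:ℝ) 1).indicator
      (fun u => ∏ j, g j (u j)) = fun u => ∏ j, (Set.Icc (0:ℝ) 1).indicator (g j) (u j) := by
    ext u
    by_cases h : u ∈ Set.pi Set.univ (fun _ : Fin d => Set.Icc (0:ℝ) 1)
    · rw [Set.indicator_of_mem h]
      exact Finset.prod_congr rfl fun j _ => (Set.indicator_of_mem (h j trivial) _).symm
    · rw [Set.indicator_of_notMem h]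
      obtain ⟨j, hj⟩ : ∃ j, u j ∉ Set.Icc (0:ℝ) 1 := by
        by_contra hc
        push_neg at hc
        exact h fun j _ => hc j
      exact (Finset.prod_eq_zero (Finset.mem_univ j) (Set.indicator_of_notMem hj _)).symm
  rw [hind, MeasureTheory.integral_fintype_prod_volume_eq_prod (ι := Fin d)
    (fun j => (Set.Icc (0:ℝ) 1).indicator (g j))]
  exact Finset.prod_congr rfl fun j _ => MeasureTheory.integral_indicator measurableSet_Icc

lemma pi_integral' {d : ℕ} (e f : Fin d → ℕ) :
    ∫ u in Set.pi Set.univ (fun _ : Fin d => Set.Icc (0:ℝ) 1),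
        ∏ j, u j ^ e j * (1 - u j) ^ f j
      = ∏ j, ∫ x in Set.Icc (0:ℝ) 1, x ^ e j * (1 - x) ^ f j :=
  pi_integral (fun j x => x ^ e j * (1 - x) ^ f j)

lemma expand_lemma {d : ℕ} (nn a b : Fin d → ℕ) (y : ℝ) (u : Fin d → ℝ) :
    ∏ j : Fin d, (1 - y * ∏ i ∈ Finset.univ.filter fun i : Fin d => j ≤ i, u i) ^ (nn j)
        * u j ^ a j * (1 - u j) ^ b j
      = ∑ k ∈ Fintype.piFinset (fun j : Fin d => Finset.range (nn j + 1)),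
          (∏ j : Fin d, ((nn j).choose (k j) : ℝ) * (-y) ^ (k j)) *
          ∏ j : Fin d, u j ^ (a j + ∑ i ∈ Finset.univ.filter (fun i : Fin d => i ≤ j), k i)
            * (1 - u j) ^ b j := by
  have h1 : ∀ j : Fin d, (1 - y * ∏ i ∈ Finset.univ.filter fun i : Fin d => j ≤ i, u i) ^ (nn j)
      = ∑ kj ∈ Finset.range (nn j + 1), ((nn j).choose kj : ℝ) * (-y) ^ kj
          * (∏ i ∈ Finset.univ.filter fun i : Fin d => j ≤ i, u i) ^ kj := by
    intro j
    rw [sub_eq_add_neg, add_comm, add_pow]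
    exact Finset.sum_congr rfl fun kj _ => by ring
  calc ∏ j : Fin d, (1 - y * ∏ i ∈ Finset.univ.filter fun i : Fin d => j ≤ i, u i) ^ (nn j)
        * u j ^ a j * (1 - u j) ^ b j
      = ∏ j : Fin d, ∑ kj ∈ Finset.range (nn j + 1),
          ((nn j).choose kj : ℝ) * (-y) ^ kj
            * ((∏ i ∈ Finset.univ.filter fun i : Fin d => j ≤ i, u i) ^ kj
              * (u j ^ a j * (1 - u j) ^ b j)) := by
        refine Finset.prod_congr rfl fun j _ => ?_
        rw [h1 j, Finset.sum_mul, Finset.sum_mul]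
        exact Finset.sum_congr rfl fun kj _ => by ring
    _ = ∑ k ∈ Fintype.piFinset (fun j : Fin d => Finset.range (nn j + 1)),
          ∏ j : Fin d, ((nn j).choose (k j) : ℝ) * (-y) ^ (k j)
            * ((∏ i ∈ Finset.univ.filter fun i : Fin d => j ≤ i, u i) ^ (k j)
              * (u j ^ a j * (1 - u j) ^ b j)) := Finset.prod_univ_sum _ _
    _ = _ := by
        refine Finset.sum_congr rfl fun k _ => ?_
        rw [Finset.prod_mul_distrib]
        congr 1
        have hswap : ∏ j : Fin d, (∏ i ∈ Finset.univ.filter fun i : Fin d => j ≤ i, u i) ^ (k j)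
            = ∏ i : Fin d, u i ^ (∑ j ∈ Finset.univ.filter (fun j : Fin d => j ≤ i), k j) := by
          calc ∏ j : Fin d, (∏ i ∈ Finset.univ.filter fun i : Fin d => j ≤ i, u i) ^ (k j)
              = ∏ j : Fin d, ∏ i ∈ Finset.univ.filter (fun i : Fin d => j ≤ i), u i ^ (k j) := by
                exact Finset.prod_congr rfl fun j _ => (Finset.prod_pow _ _ _).symm
            _ = ∏ i : Fin d, ∏ j ∈ Finset.univ.filter (fun j : Fin d => j ≤ i), u i ^ (k j) :=
                Finset.prod_comm' (by intro x y; simp [and_comm])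
            _ = _ := Finset.prod_congr rfl fun i _ => (Finset.prod_pow_eq_pow_sum _ _ _)
        rw [Finset.prod_mul_distrib, hswap, ← Finset.prod_mul_distrib]
        refine Finset.prod_congr rfl fun j _ => ?_
        rw [pow_add]
        ring

lemma factor_id (A B nj kj K : ℕ) (hk : kj ≤ nj) (y : ℝ) :
    ((A + B + 1).factorial : ℝ) / ((A.factorial : ℝ) * (B.factorial : ℝ))
        * ((nj.choose kj : ℝ) * (-y) ^ kj)
        * ((((A + K).factorial : ℝ) * (B.factorial : ℝ)) / ((A + K + B + 1).factorial : ℝ))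
      = (ascPochhammer ℝ kj).eval (-(nj:ℝ)) * (ascPochhammer ℝ K).eval ((A:ℝ) + 1)
          / ((kj.factorial : ℝ) * (ascPochhammer ℝ K).eval (((A + B + 1 : ℕ) : ℝ) + 1))
          * y ^ kj := by
  rw [poch_neg nj kj hk, poch_pos, poch_pos,
    show A + K + B + 1 = (A + B + 1) + K from by omega, neg_pow]
  have h1 : (A.factorial : ℝ) ≠ 0 := by exact_mod_cast (Nat.factorial_pos _).ne'
  have h2 : (B.factorial : ℝ) ≠ 0 := by exact_mod_cast (Nat.factorial_pos _).ne'
  have h3 : (kj.factorial : ℝ) ≠ 0 := by exact_mod_cast (Nat.factorial_pos _).ne'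
  have h4 : (((A + B + 1) + K).factorial : ℝ) ≠ 0 := by exact_mod_cast (Nat.factorial_pos _).ne'
  have h5 : ((A + B + 1).factorial : ℝ) ≠ 0 := by exact_mod_cast (Nat.factorial_pos _).ne'
  field_simp

/-- The polynomial `Q_m(y)` (with parameters `n_1,…,n_m`, `τ_1,…,τ_m`, indexed from 1), for
`m ≥ 2`:
`Q_m(y) = ∑_{k_1=0}^{n_1} ⋯ ∑_{k_{m−1}=0}^{n_{m−1}} ∏_{j=1}^{m−1}
  (−n_j)_{k_j} (1+n_m+τ_m−τ_{j+1})_{k_1+⋯+k_j} /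
    (k_j! (1+n_m+τ_m−n_j−τ_j)_{k_1+⋯+k_j}) · y^{k_j}`. -/
noncomputable def Q (m : ℕ) (n τ : ℕ → ℕ) (y : ℝ) : ℝ :=
  ∑ k ∈ Fintype.piFinset (fun j : Fin (m - 1) => Finset.range (n (j.1 + 1) + 1)),
    ∏ j : Fin (m - 1),
      ((ascPochhammer ℝ (k j)).eval (-(n (j.1 + 1) : ℝ)) *
          (ascPochhammer ℝ
              (∑ i ∈ Finset.univ.filter fun i : Fin (m - 1) => i ≤ j, k i)).eval
            ((1 : ℝ) + n m + τ m - τ (j.1 + 2)) /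
          (((k j).factorial : ℝ) *
            (ascPochhammer ℝ
                (∑ i ∈ Finset.univ.filter fun i : Fin (m - 1) => i ≤ j, k i)).eval
              ((1 : ℝ) + n m + τ m - n (j.1 + 1) - τ (j.1 + 1))) *
        y ^ k j)

theorem stmt_19 (m : ℕ) (hm : 2 ≤ m) (n τ : ℕ → ℕ)
    (hn : ∀ j, 1 ≤ j → j ≤ m → 0 < n j)
    (hup : ∀ j, 1 ≤ j → j ≤ m - 1 → τ (j + 1) ≤ n m + τ m)
    (hlow : ∀ j, 1 ≤ j → j ≤ m - 1 → n j + τ j < τ (j + 1)) :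
    (∀ y : ℝ,
      Q m n τ y =
        (∏ j ∈ Finset.Icc 1 (m - 1),
            ((n m + τ m - n j - τ j).factorial : ℝ) /
              (((n m + τ m - τ (j + 1)).factorial : ℝ) *
                ((τ (j + 1) - n j - τ j - 1).factorial : ℝ))) *
          ∫ u in Set.pi Set.univ (fun _ : Fin (m - 1) => Set.Icc (0 : ℝ) 1),
            ∏ j : Fin (m - 1),
              (1 - y * ∏ i ∈ Finset.univ.filter fun i : Fin (m - 1) => j ≤ i, u i) ^
                  (n (j.1 + 1)) *
                u j ^ (n m + τ m - τ (j.1 + 2)) *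
                (1 - u j) ^ (τ (j.1 + 2) - n (j.1 + 1) - τ (j.1 + 1) - 1)) ∧
    ∀ y ∈ Set.Icc (0 : ℝ) 1, 0 ≤ Q m n τ y ∧ Q m n τ y ≤ 1 := by
  have hτ : ∀ j : Fin (m-1), τ (j.1+2) ≤ n m + τ m := by
    intro j
    have h := hup (j.1+1) (by omega) (by omega)
    rwa [show j.1+1+1 = j.1+2 from by omega] at h
  have hnτ : ∀ j : Fin (m-1), n (j.1+1) + τ (j.1+1) < τ (j.1+2) := by
    intro j
    have h := hlow (j.1+1) (by omega) (by omega)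
    rwa [show j.1+1+1 = j.1+2 from by omega] at h
  have hcompact : IsCompact (Set.pi Set.univ (fun _ : Fin (m-1) => Set.Icc (0:ℝ) 1)) :=
    isCompact_univ_pi fun _ => isCompact_Icc
  have hmeas : MeasurableSet (Set.pi Set.univ (fun _ : Fin (m-1) => Set.Icc (0:ℝ) 1)) :=
    MeasurableSet.univ_pi fun _ => measurableSet_Icc
  have hcontF : ∀ y : ℝ, Continuous (fun u : Fin (m-1) → ℝ =>
      ∏ j : Fin (m-1),
        (1 - y * ∏ i ∈ Finset.univ.filter fun i : Fin (m-1) => j ≤ i, u i) ^ (n (j.1 + 1)) *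
          u j ^ (n m + τ m - τ (j.1 + 2)) *
          (1 - u j) ^ (τ (j.1 + 2) - n (j.1 + 1) - τ (j.1 + 1) - 1)) := by
    intro y
    apply continuous_finset_prod
    intro j _
    exact (((continuous_const.sub (continuous_const.mul
        (continuous_finset_prod _ fun i _ => continuous_apply i))).pow _).mul
      ((continuous_apply j).pow _)).mul ((continuous_const.sub (continuous_apply j)).pow _)
  have hintF : ∀ y : ℝ, IntegrableOn (fun u : Fin (m-1) → ℝ =>
      ∏ j : Fin (m-1),
        (1 - y * ∏ i ∈ Finset.univ.filter fun i : Fin (m-1) => j ≤ i, u i) ^ (n (j.1 + 1)) *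
          u j ^ (n m + τ m - τ (j.1 + 2)) *
          (1 - u j) ^ (τ (j.1 + 2) - n (j.1 + 1) - τ (j.1 + 1) - 1))
      (Set.pi Set.univ (fun _ : Fin (m-1) => Set.Icc (0:ℝ) 1)) :=
    fun y => ((hcontF y).continuousOn).integrableOn_compact hcompact
  have hmain : ∀ y : ℝ,
      Q m n τ y =
        (∏ j ∈ Finset.Icc 1 (m - 1),
            ((n m + τ m - n j - τ j).factorial : ℝ) /
              (((n m + τ m - τ (j + 1)).factorial : ℝ) *
                ((τ (j + 1) - n j - τ j - 1).factorial : ℝ))) *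
          ∫ u in Set.pi Set.univ (fun _ : Fin (m - 1) => Set.Icc (0 : ℝ) 1),
            ∏ j : Fin (m - 1),
              (1 - y * ∏ i ∈ Finset.univ.filter fun i : Fin (m - 1) => j ≤ i, u i) ^
                  (n (j.1 + 1)) *
                u j ^ (n m + τ m - τ (j.1 + 2)) *
                (1 - u j) ^ (τ (j.1 + 2) - n (j.1 + 1) - τ (j.1 + 1) - 1) := by
    intro y
    have hexp : (fun u : Fin (m-1) → ℝ =>
        ∏ j : Fin (m-1),
          (1 - y * ∏ i ∈ Finset.univ.filter fun i : Fin (m-1) => j ≤ i, u i) ^ (n (j.1 + 1)) *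
            u j ^ (n m + τ m - τ (j.1 + 2)) *
            (1 - u j) ^ (τ (j.1 + 2) - n (j.1 + 1) - τ (j.1 + 1) - 1))
        = fun u => ∑ k ∈ Fintype.piFinset (fun j : Fin (m-1) => Finset.range (n (j.1+1) + 1)),
            (∏ j : Fin (m-1), ((n (j.1+1)).choose (k j) : ℝ) * (-y) ^ (k j)) *
            ∏ j : Fin (m-1),
              u j ^ ((n m + τ m - τ (j.1+2))
                  + ∑ i ∈ Finset.univ.filter (fun i : Fin (m-1) => i ≤ j), k i)
                * (1 - u j) ^ (τ (j.1+2) - n (j.1+1) - τ (j.1+1) - 1) :=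
      funext fun u => expand_lemma _ _ _ y u
    have hint : ∀ k ∈ Fintype.piFinset (fun j : Fin (m-1) => Finset.range (n (j.1+1) + 1)),
        IntegrableOn (fun u : Fin (m-1) → ℝ =>
          (∏ j : Fin (m-1), ((n (j.1+1)).choose (k j) : ℝ) * (-y) ^ (k j)) *
          ∏ j : Fin (m-1),
            u j ^ ((n m + τ m - τ (j.1+2))
                + ∑ i ∈ Finset.univ.filter (fun i : Fin (m-1) => i ≤ j), k i)
              * (1 - u j) ^ (τ (j.1+2) - n (j.1+1) - τ (j.1+1) - 1))
          (Set.pi Set.univ (fun _ : Fin (m-1) => Set.Icc (0:ℝ) 1)) := by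
      intro k _
      apply Integrable.const_mul
      refine ContinuousOn.integrableOn_compact hcompact (Continuous.continuousOn ?_)
      apply continuous_finset_prod
      intro j _
      exact ((continuous_apply j).pow _).mul ((continuous_const.sub (continuous_apply j)).pow _)
    have hR : (∫ u in Set.pi Set.univ (fun _ : Fin (m - 1) => Set.Icc (0 : ℝ) 1),
          ∏ j : Fin (m - 1),
            (1 - y * ∏ i ∈ Finset.univ.filter fun i : Fin (m - 1) => j ≤ i, u i) ^
                (n (j.1 + 1)) *
              u j ^ (n m + τ m - τ (j.1 + 2)) *
              (1 - u j) ^ (τ (j.1 + 2) - n (j.1 + 1) - τ (j.1 + 1) - 1))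
        = ∑ k ∈ Fintype.piFinset (fun j : Fin (m-1) => Finset.range (n (j.1+1) + 1)),
            (∏ j : Fin (m-1), ((n (j.1+1)).choose (k j) : ℝ) * (-y) ^ (k j)) *
            ∏ j : Fin (m-1),
              ((((n m + τ m - τ (j.1+2))
                  + ∑ i ∈ Finset.univ.filter (fun i : Fin (m-1) => i ≤ j), k i).factorial : ℝ)
                * ((τ (j.1+2) - n (j.1+1) - τ (j.1+1) - 1).factorial : ℝ))
              / (((n m + τ m - τ (j.1+2))
                  + (∑ i ∈ Finset.univ.filter (fun i : Fin (m-1) => i ≤ j), k i)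
                  + (τ (j.1+2) - n (j.1+1) - τ (j.1+1) - 1) + 1).factorial : ℝ) := by
      rw [hexp, integral_finset_sum _ hint]
      refine Finset.sum_congr rfl fun k hk => ?_
      rw [integral_const_mul, pi_integral'
        (fun j : Fin (m-1) => (n m + τ m - τ (j.1+2))
          + ∑ i ∈ Finset.univ.filter (fun i : Fin (m-1) => i ≤ j), k i)
        (fun j : Fin (m-1) => τ (j.1+2) - n (j.1+1) - τ (j.1+1) - 1)]
      congr 1
      exact Finset.prod_congr rfl fun j _ => beta_nat _ _
    have hC : (∏ j ∈ Finset.Icc 1 (m - 1),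
          ((n m + τ m - n j - τ j).factorial : ℝ) /
            (((n m + τ m - τ (j + 1)).factorial : ℝ) *
              ((τ (j + 1) - n j - τ j - 1).factorial : ℝ)))
        = ∏ j : Fin (m-1),
            ((((n m + τ m - τ (j.1+2)) + (τ (j.1+2) - n (j.1+1) - τ (j.1+1) - 1) + 1).factorial : ℝ)
              / (((n m + τ m - τ (j.1+2)).factorial : ℝ)
                * ((τ (j.1+2) - n (j.1+1) - τ (j.1+1) - 1).factorial : ℝ))) := by
      rw [show Finset.Icc 1 (m-1) = Finset.Ico 1 m from by
          rw [← Finset.Ico_add_one_right_eq_Icc]; congr 1; omega,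
        Finset.prod_Ico_eq_prod_range,
        ← Fin.prod_univ_eq_prod_range (fun x =>
          ((n m + τ m - n (1+x) - τ (1+x)).factorial : ℝ) /
            (((n m + τ m - τ (1+x+1)).factorial : ℝ) *
              ((τ (1+x+1) - n (1+x) - τ (1+x) - 1).factorial : ℝ))) (m-1)]
      refine Finset.prod_congr rfl fun j _ => ?_
      rw [show 1 + (j:ℕ) = j.1 + 1 from by omega, show (j:ℕ) + 1 + 1 = j.1 + 2 from by omega,
        show n m + τ m - n (j.1+1) - τ (j.1+1)
          = (n m + τ m - τ (j.1+2)) + (τ (j.1+2) - n (j.1+1) - τ (j.1+1) - 1) + 1 from by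
            have h1 := hτ j; have h2 := hnτ j; omega]
    rw [hR, hC, Finset.mul_sum]
    unfold Q
    refine Finset.sum_congr rfl fun k hk => ?_
    have hkle : ∀ j : Fin (m-1), k j ≤ n (j.1+1) := fun j =>
      Finset.mem_range_succ_iff.mp (Fintype.mem_piFinset.mp hk j)
    rw [← mul_assoc, ← Finset.prod_mul_distrib, ← Finset.prod_mul_distrib]
    refine Finset.prod_congr rfl fun j _ => ?_
    have e2 : (1 : ℝ) + n m + τ m - τ (j.1 + 2)
        = ((n m + τ m - τ (j.1+2) : ℕ) : ℝ) + 1 := by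
      rw [Nat.cast_sub (hτ j)]; push_cast; ring
    have e3 : (1 : ℝ) + n m + τ m - n (j.1 + 1) - τ (j.1 + 1)
        = (((n m + τ m - τ (j.1+2)) + (τ (j.1+2) - n (j.1+1) - τ (j.1+1) - 1) + 1 : ℕ) : ℝ) + 1 := by
      have h1 := hτ j; have h2 := hnτ j
      rw [show (n m + τ m - τ (j.1+2)) + (τ (j.1+2) - n (j.1+1) - τ (j.1+1) - 1) + 1
          = n m + τ m - (n (j.1+1) + τ (j.1+1)) from by omega,
        Nat.cast_sub (by omega)]
      push_cast; ring
    rw [e2, e3]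
    exact (factor_id _ _ _ _ _ (hkle j) y).symm
  refine ⟨hmain, ?_⟩
  have hQ0 : Q m n τ 0 = 1 := by
    unfold Q
    rw [Finset.sum_eq_single (fun _ : Fin (m-1) => 0)]
    · simp
    · intro k hk hne
      obtain ⟨j, hj⟩ := Function.ne_iff.mp hne
      refine Finset.prod_eq_zero (Finset.mem_univ j) ?_
      rw [zero_pow hj, mul_zero]
    · intro h
      exact absurd (by simp) h
  have hCpos : 0 ≤ ∏ j ∈ Finset.Icc 1 (m - 1),
      ((n m + τ m - n j - τ j).factorial : ℝ) /
        (((n m + τ m - τ (j + 1)).factorial : ℝ) *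
          ((τ (j + 1) - n j - τ j - 1).factorial : ℝ)) :=
    Finset.prod_nonneg fun j _ => by positivity
  intro y hy
  obtain ⟨hy0, hy1⟩ := hy
  have hP : ∀ u ∈ Set.pi Set.univ (fun _ : Fin (m-1) => Set.Icc (0:ℝ) 1), ∀ j : Fin (m-1),
      0 ≤ ∏ i ∈ Finset.univ.filter (fun i : Fin (m-1) => j ≤ i), u i ∧
      (∏ i ∈ Finset.univ.filter (fun i : Fin (m-1) => j ≤ i), u i) ≤ 1 := by
    intro u hu j
    constructor
    · exact Finset.prod_nonneg fun i _ => (hu i trivial).1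
    · exact Finset.prod_le_one (fun i _ => (hu i trivial).1) (fun i _ => (hu i trivial).2)
  have hfac : ∀ u ∈ Set.pi Set.univ (fun _ : Fin (m-1) => Set.Icc (0:ℝ) 1), ∀ j : Fin (m-1),
      0 ≤ (1 - y * ∏ i ∈ Finset.univ.filter fun i : Fin (m-1) => j ≤ i, u i) ^ (n (j.1 + 1)) *
          u j ^ (n m + τ m - τ (j.1 + 2)) *
          (1 - u j) ^ (τ (j.1 + 2) - n (j.1 + 1) - τ (j.1 + 1) - 1) ∧
      (1 - y * ∏ i ∈ Finset.univ.filter fun i : Fin (m-1) => j ≤ i, u i) ^ (n (j.1 + 1)) *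
          u j ^ (n m + τ m - τ (j.1 + 2)) *
          (1 - u j) ^ (τ (j.1 + 2) - n (j.1 + 1) - τ (j.1 + 1) - 1)
        ≤ (1 - (0:ℝ) * ∏ i ∈ Finset.univ.filter fun i : Fin (m-1) => j ≤ i, u i) ^ (n (j.1 + 1)) *
          u j ^ (n m + τ m - τ (j.1 + 2)) *
          (1 - u j) ^ (τ (j.1 + 2) - n (j.1 + 1) - τ (j.1 + 1) - 1) := by
    intro u hu j
    obtain ⟨hP0, hP1⟩ := hP u hu j
    have h1 : 0 ≤ 1 - y * ∏ i ∈ Finset.univ.filter fun i : Fin (m-1) => j ≤ i, u i := by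
      nlinarith
    have h2 : (1 - y * ∏ i ∈ Finset.univ.filter fun i : Fin (m-1) => j ≤ i, u i) ≤ 1 := by
      nlinarith
    have hu0 := (hu j trivial).1
    have hu1 := (hu j trivial).2
    constructor
    · apply mul_nonneg (mul_nonneg (pow_nonneg h1 _) (pow_nonneg hu0 _))
      apply pow_nonneg; linarith
    · apply mul_le_mul_of_nonneg_right _ (pow_nonneg (by linarith : (0:ℝ) ≤ 1 - u j) _)
      apply mul_le_mul_of_nonneg_right _ (pow_nonneg hu0 _)
      rw [zero_mul, sub_zero, one_pow]
      exact pow_le_one₀ h1 h2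
  constructor
  · rw [hmain y]
    refine mul_nonneg hCpos (setIntegral_nonneg hmeas fun u hu => ?_)
    exact Finset.prod_nonneg fun j _ => (hfac u hu j).1
  · have hle : (∫ u in Set.pi Set.univ (fun _ : Fin (m - 1) => Set.Icc (0 : ℝ) 1),
        ∏ j : Fin (m - 1),
          (1 - y * ∏ i ∈ Finset.univ.filter fun i : Fin (m - 1) => j ≤ i, u i) ^ (n (j.1 + 1)) *
            u j ^ (n m + τ m - τ (j.1 + 2)) *
            (1 - u j) ^ (τ (j.1 + 2) - n (j.1 + 1) - τ (j.1 + 1) - 1))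
        ≤ ∫ u in Set.pi Set.univ (fun _ : Fin (m - 1) => Set.Icc (0 : ℝ) 1),
        ∏ j : Fin (m - 1),
          (1 - (0:ℝ) * ∏ i ∈ Finset.univ.filter fun i : Fin (m - 1) => j ≤ i, u i) ^ (n (j.1 + 1)) *
            u j ^ (n m + τ m - τ (j.1 + 2)) *
            (1 - u j) ^ (τ (j.1 + 2) - n (j.1 + 1) - τ (j.1 + 1) - 1) := by
      refine setIntegral_mono_on (hintF y) (hintF 0) hmeas fun u hu => ?_
      exact Finset.prod_le_prod (fun j _ => (hfac u hu j).1) (fun j _ => (hfac u hu j).2)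
    calc Q m n τ y ≤ Q m n τ 0 := by
          rw [hmain y, hmain 0]
          exact mul_le_mul_of_nonneg_left hle hCpos
      _ = 1 := hQ0
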